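/- Let (Ω, ℙ) be a probability space, E_l: Ω → [0,∞) nonnegative random variables, μ_l: Ω → (0,1) positive random variables such that μ_l·E_l converges in distribution to a nonnegative random variable E with ℙ(E = 0) = 0. Let N_l: Ω → [0,∞) satisfy μ_l·N_l → 0 pointwise almost everywhere. Then ℙ(E_l ≤ N_l) → 0 as l → ∞. -/

import Mathlib

open MeasureTheory Filter Topology

/-- Convergence in distribution of real random variables, via bounded continuous test
functions. -/
def ConvInDist {Ω : Type*} [MeasurableSpace Ω] (P : Measure Ω)
    (X : ℕ → Ω → ℝ) (Y : Ω → ℝ) : Prop :=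
  ∀ g : BoundedContinuousFunction ℝ ℝ,
    Tendsto (fun l => ∫ ω, g (X l ω) ∂P) atTop (𝓝 (∫ ω, g (Y ω) ∂P))

/-- if `μ_l E_l ⇒ E` with `P(E=0)=0` and `μ_l N_l → 0` a.e., then
`P(E_l ≤ N_l) → 0`. -/
theorem stmt_6 {Ω : Type*} [MeasurableSpace Ω] (P : Measure Ω) [IsProbabilityMeasure P]
    (E : ℕ → Ω → ℝ) (hEmeas : ∀ l, Measurable (E l)) (hE : ∀ l ω, 0 ≤ E l ω)
    (μl : ℕ → Ω → ℝ) (hμmeas : ∀ l, Measurable (μl l))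
    (hμ : ∀ l ω, 0 < μl l ω ∧ μl l ω < 1)
    (Elim : Ω → ℝ) (hElimmeas : Measurable Elim) (hElim : ∀ ω, 0 ≤ Elim ω)
    (h0 : P {ω | Elim ω = 0} = 0)
    (hconv : ConvInDist P (fun l ω => μl l ω * E l ω) Elim)
    (N : ℕ → Ω → ℝ) (hNmeas : ∀ l, Measurable (N l)) (hN : ∀ l ω, 0 ≤ N l ω)
    (hNlim : ∀ᵐ ω ∂P, Tendsto (fun l => μl l ω * N l ω) atTop (𝓝 0)) :
    Tendsto (fun l => P {ω | E l ω ≤ N l ω}) atTop (𝓝 0) := by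
  rw [ENNReal.tendsto_nhds_zero]
  intro ε hε
  obtain ⟨εr, hεr, hεrle⟩ : ∃ εr : ℝ, 0 < εr ∧ ENNReal.ofReal εr ≤ ε := by
    rcases eq_top_or_lt_top ε with h | h
    · exact ⟨1, one_pos, h ▸ le_top⟩
    · refine ⟨ε.toReal, ENNReal.toReal_pos hε.ne' h.ne, by rw [ENNReal.ofReal_toReal h.ne]⟩
  have hεr3 : (0:ℝ) < εr / 3 := by linarith
  -- Step 1: choose δ' > 0 with P {Elim ≤ δ'} < ofReal (εr/3)
  have hanti : Antitone (fun n : ℕ => {ω | Elim ω ≤ 1 / ((n:ℝ) + 1)}) := by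
    intro m n hmn ω hω
    simp only [Set.mem_setOf_eq] at hω ⊢
    refine le_trans hω ?_
    have h1 : (m:ℝ) + 1 ≤ (n:ℝ) + 1 := by exact_mod_cast Nat.succ_le_succ hmn
    exact one_div_le_one_div_of_le (by positivity) h1
  have hcont : Tendsto (fun n : ℕ => P {ω | Elim ω ≤ 1 / ((n:ℝ) + 1)}) atTop
      (𝓝 (P (⋂ n : ℕ, {ω | Elim ω ≤ 1 / ((n:ℝ) + 1)}))) :=
    tendsto_measure_iInter_atTop
      (fun n => (hElimmeas measurableSet_Iic).nullMeasurableSet)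
      hanti ⟨0, measure_ne_top _ _⟩
  have hiInter : (⋂ n : ℕ, {ω | Elim ω ≤ 1 / ((n:ℝ) + 1)}) = {ω | Elim ω = 0} := by
    ext ω
    simp only [Set.mem_iInter, Set.mem_setOf_eq]
    constructor
    · intro h
      refine le_antisymm ?_ (hElim ω)
      exact ge_of_tendsto' tendsto_one_div_add_atTop_nhds_zero_nat h
    · intro h n; rw [h]; positivity
  rw [hiInter, h0] at hcont
  obtain ⟨n, hn⟩ := ((ENNReal.tendsto_nhds_zero.1 hcont) (ENNReal.ofReal (εr/3) / 2)
    (ENNReal.div_pos (ENNReal.ofReal_pos.2 hεr3).ne' (by norm_num))).exists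
  set δ' : ℝ := 1 / ((n:ℝ) + 1) with hδ'def
  have hδ' : 0 < δ' := by positivity
  have hPδ' : P {ω | Elim ω ≤ δ'} < ENNReal.ofReal (εr / 3) :=
    lt_of_le_of_lt hn (ENNReal.half_lt_self (ENNReal.ofReal_pos.2 hεr3).ne' ENNReal.ofReal_ne_top)
  set δ : ℝ := δ' / 2 with hδdef
  have hδ : 0 < δ := by positivity
  have hδδ' : δ < δ' := by rw [hδdef]; linarith
  -- Step 2: the test function
  set f : ℝ → ℝ := fun x => max 0 (min 1 ((δ' - x) / (δ' - δ))) with hfdef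
  have hfcont : Continuous f :=
    continuous_const.max (continuous_const.min (by fun_prop))
  have hf0 : ∀ x, 0 ≤ f x := fun x => le_max_left _ _
  have hf1 : ∀ x, f x ≤ 1 := fun x => max_le zero_le_one (min_le_left _ _)
  have hfone : ∀ x, x ≤ δ → f x = 1 := by
    intro x hx
    have h1 : (1:ℝ) ≤ (δ' - x) / (δ' - δ) := by
      rw [le_div_iff₀ (by linarith)]; linarith
    show max 0 (min 1 ((δ' - x) / (δ' - δ))) = 1
    rw [min_eq_left h1, max_eq_right zero_le_one]
  have hfzero : ∀ x, δ' ≤ x → f x = 0 := by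
    intro x hx
    have h1 : (δ' - x) / (δ' - δ) ≤ 0 :=
      div_nonpos_of_nonpos_of_nonneg (by linarith) (by linarith)
    show max 0 (min 1 ((δ' - x) / (δ' - δ))) = 0
    rw [min_eq_right (h1.trans zero_le_one), max_eq_left h1]
  set g : BoundedContinuousFunction ℝ ℝ :=
    BoundedContinuousFunction.mkOfBound ⟨f, hfcont⟩ 1 (fun x y => by
      simp only [ContinuousMap.coe_mk]
      rw [Real.dist_eq, abs_sub_le_iff]
      exact ⟨by linarith [hf1 x, hf0 y], by linarith [hf1 y, hf0 x]⟩) with hgdef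
  have hgapp : ∀ x, g x = f x := fun _ => rfl
  -- integrability
  have hint : ∀ (X : Ω → ℝ), Measurable X → Integrable (fun ω => f (X ω)) P := by
    intro X hX
    refine ⟨((hfcont.measurable).comp hX).aestronglyMeasurable, ?_⟩
    refine (hasFiniteIntegral_const (1:ℝ)).mono' ?_
    filter_upwards with ω
    rw [Real.norm_eq_abs, abs_of_nonneg (hf0 _)]
    exact hf1 _
  have hintind : ∀ (s : Set Ω), MeasurableSet s →
      Integrable (fun ω => s.indicator (1 : Ω → ℝ) ω) P :=
    fun s hs => (integrable_const (1:ℝ)).indicator hs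
  have hmeasA : ∀ l, MeasurableSet {ω | μl l ω * E l ω ≤ δ} :=
    fun l => ((hμmeas l).mul (hEmeas l)) measurableSet_Iic
  -- key inequality (a)
  have ha : ∀ l, (P {ω | μl l ω * E l ω ≤ δ}).toReal ≤ ∫ ω, f (μl l ω * E l ω) ∂P := by
    intro l
    rw [← measureReal_def, ← integral_indicator_one (hmeasA l)]
    refine integral_mono (hintind _ (hmeasA l)) (hint _ ((hμmeas l).mul (hEmeas l))) fun ω => ?_
    by_cases hω : ω ∈ {ω | μl l ω * E l ω ≤ δ}
    · rw [Set.indicator_of_mem hω, hfone _ hω]; rfl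
    · rw [Set.indicator_of_notMem hω]; exact hf0 _
  -- key inequality (b)
  have hb : ∫ ω, f (Elim ω) ∂P ≤ (P {ω | Elim ω ≤ δ'}).toReal := by
    have hsetδ' : MeasurableSet {ω | Elim ω ≤ δ'} := measurableSet_le hElimmeas measurable_const
    rw [← measureReal_def, ← integral_indicator_one hsetδ']
    refine integral_mono (hint _ hElimmeas) (hintind _ hsetδ') fun ω => ?_
    by_cases hω : ω ∈ {ω | Elim ω ≤ δ'}
    · rw [Set.indicator_of_mem hω]; exact hf1 _
    · rw [Set.indicator_of_notMem hω, hfzero _ (le_of_not_ge hω)]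
  -- Step 4
  have hlim_lt : ∫ ω, f (Elim ω) ∂P < εr / 3 :=
    hb.trans_lt (ENNReal.toReal_lt_of_lt_ofReal hPδ')
  have hev1 : ∀ᶠ l in atTop, P {ω | μl l ω * E l ω ≤ δ} ≤ ENNReal.ofReal (2 * εr / 3) := by
    have hnear : ∀ᶠ l in atTop,
        (∫ ω, g ((fun l ω => μl l ω * E l ω) l ω) ∂P) < 2 * εr / 3 :=
      (hconv g).eventually (eventually_lt_nhds (show (∫ ω, g (Elim ω) ∂P) < 2*εr/3 by
        have : (∫ ω, g (Elim ω) ∂P) = ∫ ω, f (Elim ω) ∂P := rfl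
        rw [this]; linarith))
    filter_upwards [hnear] with l hl
    rw [ENNReal.le_ofReal_iff_toReal_le (measure_ne_top _ _) (by linarith)]
    exact (ha l).trans hl.le
  -- Step 5
  have htim : TendstoInMeasure P (fun l ω => μl l ω * N l ω) atTop (fun _ => (0:ℝ)) :=
    tendstoInMeasure_of_tendsto_ae
      (fun l => ((hμmeas l).mul (hNmeas l)).aestronglyMeasurable) hNlim
  have hev2 : ∀ᶠ l in atTop, P {ω | δ ≤ μl l ω * N l ω} ≤ ENNReal.ofReal (εr / 3) := by
    have h2 := (ENNReal.tendsto_nhds_zero.1 (htim (ENNReal.ofReal δ) (ENNReal.ofReal_pos.2 hδ))) (ENNReal.ofReal (εr/3))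
      (ENNReal.ofReal_pos.2 hεr3)
    refine h2.mono fun l hl => le_trans (measure_mono ?_) hl
    intro ω hω
    simp only [Set.mem_setOf_eq] at hω ⊢
    rw [edist_dist, Real.dist_eq, sub_zero, abs_of_nonneg (mul_nonneg (hμ l ω).1.le (hN l ω))]
    exact ENNReal.ofReal_le_ofReal hω
  -- Step 6
  filter_upwards [hev1, hev2] with l h1 h2
  have hsub : {ω | E l ω ≤ N l ω} ⊆
      {ω | μl l ω * E l ω ≤ δ} ∪ {ω | δ ≤ μl l ω * N l ω} := by
    intro ω hω
    simp only [Set.mem_setOf_eq, Set.mem_union] at hω ⊢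
    by_cases hcase : δ ≤ μl l ω * N l ω
    · exact Or.inr hcase
    · left
      have hmul := mul_le_mul_of_nonneg_left hω (hμ l ω).1.le
      linarith [lt_of_not_ge hcase]
  calc P {ω | E l ω ≤ N l ω}
      ≤ P ({ω | μl l ω * E l ω ≤ δ} ∪ {ω | δ ≤ μl l ω * N l ω}) := measure_mono hsub
    _ ≤ P {ω | μl l ω * E l ω ≤ δ} + P {ω | δ ≤ μl l ω * N l ω} := measure_union_le _ _
    _ ≤ ENNReal.ofReal (2 * εr / 3) + ENNReal.ofReal (εr / 3) := add_le_add h1 h2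
    _ = ENNReal.ofReal εr := by
        rw [← ENNReal.ofReal_add (by linarith) (by linarith)]; congr 1; ring
    _ ≤ ε := hεrle
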